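/- arXiv:2505.02552 — 7 statements merged into one kernel-verified Lean document; each statement's English description precedes it below -/
import Mathlib

section
/- Let (P,≤,0,1) be a bounded poset satisfying the ACC and the DCC, and for subsets A,B ⊆ P define A ⊔ B := Min(U(A ∪ B)) and A ⊓ B := Max(L(A ∪ B)), identifying an element x with the singleton {x}. Then for all x,y,z ∈ P: (i) x ⊔ x = {x} and x ⊓ x = {x}; (ii) x ⊔ y = y ⊔ x and x ⊓ y = y ⊓ x; (iii) 0 ⊔ x = {x} and x ⊓ 1 = {x}; (iv) x ⊔ ((x ⊔ y) ⊔ z) = 0 ⊔ ((x ⊔ y) ⊔ z) and x ⊓ ((x ⊓ y) ⊓ z) = ((x ⊓ y) ⊓ z) ⊓ 1; (v) (x ⊓ y) ⊔ y = {y} and x ⊓ (x ⊔ y) = {x}; (vi) z ∈ x ⊔ y if and only if x ⊔ z = y ⊔ z = {z} and for every u ∈ P, x ⊔ u = y ⊔ u = u ⊓ z = {u} implies u = z, and z ∈ x ⊓ y if and only if z ⊓ x = z ⊓ y = {z} and for every u ∈ P, u ⊓ x = u ⊓ y = z ⊔ u = {u} implies u = z. -/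
/-- Lower bounds of a set in a preorder. -/
def LB {P : Type*} [Preorder P] (A : Set P) : Set P := {x | ∀ a ∈ A, x ≤ a}

/-- Upper bounds of a set in a preorder. -/
def UB {P : Type*} [Preorder P] (A : Set P) : Set P := {x | ∀ a ∈ A, a ≤ x}

/-- The set of maximal elements of a set. -/
def MaxS {P : Type*} [Preorder P] (A : Set P) : Set P :=
  {x | x ∈ A ∧ ∀ y ∈ A, x ≤ y → y = x}

/-- The set of minimal elements of a set. -/
def MinS {P : Type*} [Preorder P] (A : Set P) : Set P :=
  {x | x ∈ A ∧ ∀ y ∈ A, y ≤ x → y = x}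

/-- The operator A ⊔ B := Min U(A ∪ B). -/
def osup {P : Type*} [Preorder P] (A B : Set P) : Set P := MinS (UB (A ∪ B))

/-- The operator A ⊓ B := Max L(A ∪ B). -/
def oinf {P : Type*} [Preorder P] (A B : Set P) : Set P := MaxS (LB (A ∪ B))

section Aux
variable {P : Type*} [PartialOrder P]

lemma MinS_Ici (y : P) : MinS {z : P | y ≤ z} = {y} := by
  ext m
  constructor
  · rintro ⟨hm, hmin⟩
    exact (hmin y le_rfl hm).symm
  · rintro rfl
    exact ⟨le_rfl, fun w hw hwm => le_antisymm hwm hw⟩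

lemma MaxS_Iic (x : P) : MaxS {z : P | z ≤ x} = {x} := by
  ext m
  constructor
  · rintro ⟨hm, hmax⟩
    exact (hmax x le_rfl hm).symm
  · rintro rfl
    exact ⟨le_rfl, fun w hw hwm => le_antisymm hw hwm⟩

lemma osup_eq_of_forall_le {A : Set P} {y : P} (h : ∀ a ∈ A, a ≤ y) :
    osup A {y} = {y} := by
  unfold osup
  have : UB (A ∪ {y}) = {z : P | y ≤ z} := by
    ext z
    simp only [UB, Set.mem_union, Set.mem_singleton_iff, Set.mem_setOf_eq]
    constructor
    · intro hz; exact hz y (Or.inr rfl)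
    · rintro hz a (ha | rfl)
      · exact (h a ha).trans hz
      · exact hz
  rw [this, MinS_Ici]

lemma oinf_eq_of_forall_le {x : P} {B : Set P} (h : ∀ b ∈ B, x ≤ b) :
    oinf {x} B = {x} := by
  unfold oinf
  have : LB ({x} ∪ B) = {z : P | z ≤ x} := by
    ext z
    simp only [LB, Set.mem_union, Set.mem_singleton_iff, Set.mem_setOf_eq]
    constructor
    · intro hz; exact hz x (Or.inl rfl)
    · rintro hz a (rfl | ha)
      · exact hz
      · exact hz.trans (h a ha)
  rw [this, MaxS_Iic]

lemma osup_comm (A B : Set P) : osup A B = osup B A := by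
  unfold osup; rw [Set.union_comm]

lemma oinf_comm (A B : Set P) : oinf A B = oinf B A := by
  unfold oinf; rw [Set.union_comm]

lemma mem_osup_pair {x y z : P} :
    z ∈ osup {x} {y} ↔ x ≤ z ∧ y ≤ z ∧ ∀ u, x ≤ u → y ≤ u → u ≤ z → u = z := by
  simp only [osup, MinS, UB, Set.mem_setOf_eq, Set.mem_union, Set.mem_singleton_iff]
  constructor
  · rintro ⟨hz, hmin⟩
    exact ⟨hz x (Or.inl rfl), hz y (Or.inr rfl),
      fun u hx hy => hmin u (by rintro a (rfl | rfl) <;> assumption)⟩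
  · rintro ⟨h1, h2, h3⟩
    exact ⟨by rintro a (rfl | rfl) <;> assumption,
      fun u hu => h3 u (hu x (Or.inl rfl)) (hu y (Or.inr rfl))⟩

lemma mem_oinf_pair {x y z : P} :
    z ∈ oinf {x} {y} ↔ z ≤ x ∧ z ≤ y ∧ ∀ u, u ≤ x → u ≤ y → z ≤ u → u = z := by
  simp only [oinf, MaxS, LB, Set.mem_setOf_eq, Set.mem_union, Set.mem_singleton_iff]
  constructor
  · rintro ⟨hz, hmax⟩
    exact ⟨hz x (Or.inl rfl), hz y (Or.inr rfl),
      fun u hx hy => hmax u (by rintro a (rfl | rfl) <;> assumption)⟩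
  · rintro ⟨h1, h2, h3⟩
    exact ⟨by rintro a (rfl | rfl) <;> assumption,
      fun u hu => h3 u (hu x (Or.inl rfl)) (hu y (Or.inr rfl))⟩

lemma osup_singleton_eq_iff {x y : P} : osup {x} {y} = {y} ↔ x ≤ y := by
  constructor
  · intro h
    have : y ∈ osup {x} {y} := by rw [h]; rfl
    exact (mem_osup_pair.mp this).1
  · intro h
    exact osup_eq_of_forall_le (by rintro a rfl; exact h)

lemma oinf_singleton_eq_iff {x y : P} : oinf {x} {y} = {x} ↔ x ≤ y := by
  constructor
  · intro h
    have : x ∈ oinf {x} {y} := by rw [h]; rfl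
    exact (mem_oinf_pair.mp this).2.1
  · intro h
    exact oinf_eq_of_forall_le (by rintro b rfl; exact h)

lemma exists_minimal (hDCC : ∀ f : ℕ → P, ¬ StrictAnti f) (S : Set P)
    (hS : S.Nonempty) : (MinS S).Nonempty := by
  by_contra h
  have hstep : ∀ m ∈ S, ∃ y ∈ S, y < m := by
    intro m hm
    by_contra hc
    push_neg at hc
    exact h ⟨m, hm, fun y hy hym => (lt_or_eq_of_le hym).resolve_left (hc y hy)⟩
  choose g hg1 hg2 using hstep
  let g' : S → S := fun s => ⟨g s.1 s.2, hg1 s.1 s.2⟩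
  let f : ℕ → S := fun n => g'^[n] ⟨hS.choose, hS.choose_spec⟩
  have hsa : StrictAnti (fun n => (f n : P)) := by
    apply strictAnti_nat_of_succ_lt
    intro n
    show ((g'^[n + 1] _ : S) : P) < _
    rw [Function.iterate_succ_apply']
    exact hg2 _ _
  exact hDCC _ hsa

lemma exists_maximal (hACC : ∀ f : ℕ → P, ¬ StrictMono f) (S : Set P)
    (hS : S.Nonempty) : (MaxS S).Nonempty := by
  by_contra h
  have hstep : ∀ m ∈ S, ∃ y ∈ S, m < y := by
    intro m hm
    by_contra hc
    push_neg at hc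
    exact h ⟨m, hm, fun y hy hym => ((lt_or_eq_of_le hym).resolve_left (hc y hy)).symm⟩
  choose g hg1 hg2 using hstep
  let g' : S → S := fun s => ⟨g s.1 s.2, hg1 s.1 s.2⟩
  let f : ℕ → S := fun n => g'^[n] ⟨hS.choose, hS.choose_spec⟩
  have hsm : StrictMono (fun n => (f n : P)) := by
    apply strictMono_nat_of_lt_succ
    intro n
    show (_ : P) < ((g'^[n + 1] _ : S) : P)
    rw [Function.iterate_succ_apply']
    exact hg2 _ _
  exact hACC _ hsm

end Aux

theorem stmt_4 {P : Type*} [PartialOrder P] [BoundedOrder P]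
    (hACC : ∀ f : ℕ → P, ¬ StrictMono f)
    (hDCC : ∀ f : ℕ → P, ¬ StrictAnti f) :
    (∀ x : P, osup {x} {x} = {x} ∧ oinf {x} {x} = {x}) ∧
    (∀ x y : P, osup {x} {y} = osup {y} {x} ∧ oinf {x} {y} = oinf {y} {x}) ∧
    (∀ x : P, osup {(⊥ : P)} {x} = {x} ∧ oinf {x} {(⊤ : P)} = {x}) ∧
    (∀ x y z : P,
      osup {x} (osup (osup {x} {y}) {z}) = osup {(⊥ : P)} (osup (osup {x} {y}) {z}) ∧
      oinf {x} (oinf (oinf {x} {y}) {z}) = oinf (oinf (oinf {x} {y}) {z}) {(⊤ : P)}) ∧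
    (∀ x y : P, osup (oinf {x} {y}) {y} = {y} ∧ oinf {x} (osup {x} {y}) = {x}) ∧
    (∀ x y z : P,
      (z ∈ osup {x} {y} ↔
        (osup {x} {z} = {z} ∧ osup {y} {z} = {z} ∧
          ∀ u : P, (osup {x} {u} = {u} ∧ osup {y} {u} = {u} ∧ oinf {u} {z} = {u}) → u = z)) ∧
      (z ∈ oinf {x} {y} ↔
        (oinf {z} {x} = {z} ∧ oinf {z} {y} = {z} ∧
          ∀ u : P, (oinf {u} {x} = {u} ∧ oinf {u} {y} = {u} ∧ osup {z} {u} = {u}) → u = z))) := by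
  refine ⟨fun x => ⟨?_, ?_⟩, fun x y => ⟨osup_comm _ _, oinf_comm _ _⟩,
    fun x => ⟨?_, ?_⟩, fun x y z => ⟨?_, ?_⟩, fun x y => ⟨?_, ?_⟩, fun x y z => ⟨?_, ?_⟩⟩
  · exact osup_eq_of_forall_le (by rintro a rfl; exact le_rfl)
  · exact oinf_eq_of_forall_le (by rintro b rfl; exact le_rfl)
  · exact osup_eq_of_forall_le (by rintro a rfl; exact bot_le)
  · exact oinf_eq_of_forall_le (by rintro b rfl; exact le_top)
  · -- (iv) sup
    set S := osup (osup {x} {y}) {z} with hS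
    obtain ⟨a, haA⟩ := exists_minimal hDCC (UB ({x} ∪ {y})) ⟨⊤, fun _ _ => le_top⟩
    obtain ⟨w, hwS⟩ := exists_minimal hDCC (UB (osup {x} {y} ∪ {z})) ⟨⊤, fun _ _ => le_top⟩
    have hxa : x ≤ a := haA.1 x (Or.inl rfl)
    have haw : a ≤ w := hwS.1 a (Or.inl haA)
    have hwmem : w ∈ S := hwS
    have hUB : UB ({x} ∪ S) = UB ({(⊥ : P)} ∪ S) := by
      ext u
      simp only [UB, Set.mem_union, Set.mem_singleton_iff, Set.mem_setOf_eq]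
      constructor
      · rintro hu b (rfl | hb)
        · exact bot_le
        · exact hu b (Or.inr hb)
      · rintro hu b (rfl | hb)
        · exact (hxa.trans haw).trans (hu w (Or.inr hwmem))
        · exact hu b (Or.inr hb)
    show MinS (UB ({x} ∪ S)) = MinS (UB ({(⊥ : P)} ∪ S))
    rw [hUB]
  · -- (iv) inf
    set T := oinf (oinf {x} {y}) {z} with hT
    obtain ⟨a, haA⟩ := exists_maximal hACC (LB ({x} ∪ {y})) ⟨⊥, fun _ _ => bot_le⟩
    obtain ⟨w, hwT⟩ := exists_maximal hACC (LB (oinf {x} {y} ∪ {z})) ⟨⊥, fun _ _ => bot_le⟩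
    have hax : a ≤ x := haA.1 x (Or.inl rfl)
    have hwa : w ≤ a := hwT.1 a (Or.inl haA)
    have hwmem : w ∈ T := hwT
    have hLB : LB ({x} ∪ T) = LB (T ∪ {(⊤ : P)}) := by
      ext u
      simp only [LB, Set.mem_union, Set.mem_singleton_iff, Set.mem_setOf_eq]
      constructor
      · rintro hu b (hb | rfl)
        · exact hu b (Or.inr hb)
        · exact le_top
      · rintro hu b (rfl | hb)
        · exact (hu w (Or.inl hwmem)).trans (hwa.trans hax)
        · exact hu b (Or.inl hb)
    show MaxS (LB ({x} ∪ T)) = MaxS (LB (T ∪ {(⊤ : P)}))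
    rw [hLB]
  · exact osup_eq_of_forall_le (fun a ha => ha.1 y (Or.inr rfl))
  · exact oinf_eq_of_forall_le (fun b hb => hb.1 x (Or.inl rfl))
  · rw [mem_osup_pair]
    simp only [osup_singleton_eq_iff, oinf_singleton_eq_iff]
    exact ⟨fun ⟨h1, h2, h3⟩ => ⟨h1, h2, fun u hu => h3 u hu.1 hu.2.1 hu.2.2⟩,
      fun ⟨h1, h2, h3⟩ => ⟨h1, h2, fun u a b c => h3 u ⟨a, b, c⟩⟩⟩
  · rw [mem_oinf_pair]
    simp only [oinf_singleton_eq_iff, osup_singleton_eq_iff]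
    exact ⟨fun ⟨h1, h2, h3⟩ => ⟨h1, h2, fun u hu => h3 u hu.1 hu.2.1 hu.2.2⟩,
      fun ⟨h1, h2, h3⟩ => ⟨h1, h2, fun u a b c => h3 u ⟨a, b, c⟩⟩⟩
end

section
/- Let P be a set with 0,1 ∈ P and let ⊔ and ⊓ be operators assigning to each pair of subsets of P a subset of P, identifying an element x with the singleton {x}, such that for all x,y,z ∈ P: (i) x ⊔ x = {x} and x ⊓ x = {x}; (ii) x ⊔ y = y ⊔ x and x ⊓ y = y ⊓ x; (iii) 0 ⊔ x = {x} and x ⊓ 1 = {x}; (iv) x ⊔ ((x ⊔ y) ⊔ z) = 0 ⊔ ((x ⊔ y) ⊔ z) and x ⊓ ((x ⊓ y) ⊓ z) = ((x ⊓ y) ⊓ z) ⊓ 1; (v) (x ⊓ y) ⊔ y = {y} and x ⊓ (x ⊔ y) = {x}; (vi) z ∈ x ⊔ y iff x ⊔ z = y ⊔ z = {z} and for every u ∈ P, x ⊔ u = y ⊔ u = u ⊓ z = {u} implies u = z, and z ∈ x ⊓ y iff z ⊓ x = z ⊓ y = {z} and for every u ∈ P, u ⊓ x = u ⊓ y = z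 ⊔ u = {u} implies u = z. Define x ≤ y iff x ⊔ y = {y}. Then ≤ is a partial order on P with least element 0 and greatest element 1, and for all x,y ∈ P: (a) x ≤ y iff x ⊓ y = {x}; (b) x ⊔ y = Min(U({x,y})); (c) x ⊓ y = Max(L({x,y})). -/
/-- Lower bounds of a set with respect to a relation. -/
def LBr {P : Type*} (r : P → P → Prop) (A : Set P) : Set P := {x | ∀ a ∈ A, r x a}

/-- Upper bounds of a set with respect to a relation. -/
def UBr {P : Type*} (r : P → P → Prop) (A : Set P) : Set P := {x | ∀ a ∈ A, r a x}

/-- Maximal elements of a set with respect to a relation. -/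
def MaxSr {P : Type*} (r : P → P → Prop) (A : Set P) : Set P :=
  {x | x ∈ A ∧ ∀ y ∈ A, r x y → y = x}

/-- Minimal elements of a set with respect to a relation. -/
def MinSr {P : Type*} (r : P → P → Prop) (A : Set P) : Set P :=
  {x | x ∈ A ∧ ∀ y ∈ A, r y x → y = x}

theorem stmt_5 {P : Type*} (osup oinf : Set P → Set P → Set P) (z0 z1 : P)
    (h_i : ∀ x : P, osup {x} {x} = {x} ∧ oinf {x} {x} = {x})
    (h_ii : ∀ x y : P, osup {x} {y} = osup {y} {x} ∧ oinf {x} {y} = oinf {y} {x})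
    (h_iii : ∀ x : P, osup {z0} {x} = {x} ∧ oinf {x} {z1} = {x})
    (h_iv : ∀ x y z : P,
      osup {x} (osup (osup {x} {y}) {z}) = osup {z0} (osup (osup {x} {y}) {z}) ∧
      oinf {x} (oinf (oinf {x} {y}) {z}) = oinf (oinf (oinf {x} {y}) {z}) {z1})
    (h_v : ∀ x y : P, osup (oinf {x} {y}) {y} = {y} ∧ oinf {x} (osup {x} {y}) = {x})
    (h_vi : ∀ x y z : P,
      (z ∈ osup {x} {y} ↔
        (osup {x} {z} = {z} ∧ osup {y} {z} = {z} ∧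
          ∀ u : P, (osup {x} {u} = {u} ∧ osup {y} {u} = {u} ∧ oinf {u} {z} = {u}) → u = z)) ∧
      (z ∈ oinf {x} {y} ↔
        (oinf {z} {x} = {z} ∧ oinf {z} {y} = {z} ∧
          ∀ u : P, (oinf {u} {x} = {u} ∧ oinf {u} {y} = {u} ∧ osup {z} {u} = {u}) → u = z)))
    (le : P → P → Prop) (hle : ∀ x y : P, le x y ↔ osup {x} {y} = {y}) :
    (∀ x : P, le x x) ∧
    (∀ x y : P, le x y → le y x → x = y) ∧
    (∀ x y z : P, le x y → le y z → le x z) ∧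
    (∀ x : P, le z0 x) ∧
    (∀ x : P, le x z1) ∧
    (∀ x y : P, le x y ↔ oinf {x} {y} = {x}) ∧
    (∀ x y : P, osup {x} {y} = MinSr le (UBr le {x, y})) ∧
    (∀ x y : P, oinf {x} {y} = MaxSr le (LBr le {x, y})) := by
  have ha : ∀ x y : P, le x y ↔ oinf {x} {y} = {x} := by
    intro x y
    rw [hle]
    constructor
    · intro h
      have h2 := (h_v x y).2
      rwa [h] at h2
    · intro h
      have h2 := (h_v x y).1
      rwa [h] at h2
  have htrans : ∀ x y z : P, le x y → le y z → le x z := by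
    intro x y z hxy hyz
    rw [hle] at hxy hyz ⊢
    have h4 := (h_iv x y z).1
    rw [hxy, hyz, (h_iii z).1] at h4
    exact h4
  refine ⟨?_, ?_, htrans, ?_, ?_, ha, ?_, ?_⟩
  · intro x; rw [hle]; exact (h_i x).1
  · intro x y hxy hyx
    rw [hle] at hxy hyx
    have h2 := (h_ii x y).1
    rw [hxy, hyx] at h2
    exact Set.singleton_eq_singleton_iff.mp h2.symm
  · intro x; rw [hle]; exact (h_iii x).1
  · intro x
    rw [hle]
    have h1 := (h_iii x).2
    have h2 := (h_v x z1).1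
    rwa [h1] at h2
  · intro x y
    ext z
    rw [(h_vi x y z).1]
    simp only [MinSr, UBr, Set.mem_setOf_eq, Set.mem_insert_iff, Set.mem_singleton_iff]
    constructor
    · rintro ⟨h1, h2, h3⟩
      refine ⟨?_, ?_⟩
      · rintro a (rfl | rfl)
        · exact (hle a z).mpr h1
        · exact (hle a z).mpr h2
      · intro u hu hzu
        exact h3 u ⟨(hle x u).mp (hu x (Or.inl rfl)), (hle y u).mp (hu y (Or.inr rfl)),
          (ha u z).mp hzu⟩
    · rintro ⟨hz, hmin⟩
      refine ⟨(hle x z).mp (hz x (Or.inl rfl)), (hle y z).mp (hz y (Or.inr rfl)), ?_⟩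
      rintro u ⟨h1, h2, h3⟩
      refine hmin u ?_ ((ha u z).mpr h3)
      rintro a (rfl | rfl)
      · exact (hle a u).mpr h1
      · exact (hle a u).mpr h2
  · intro x y
    ext z
    rw [(h_vi x y z).2]
    simp only [MaxSr, LBr, Set.mem_setOf_eq, Set.mem_insert_iff, Set.mem_singleton_iff]
    constructor
    · rintro ⟨h1, h2, h3⟩
      refine ⟨?_, ?_⟩
      · rintro a (rfl | rfl)
        · exact (ha z a).mpr h1
        · exact (ha z a).mpr h2
      · intro u hu hzu
        exact h3 u ⟨(ha u x).mp (hu x (Or.inl rfl)), (ha u y).mp (hu y (Or.inr rfl)),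
          (hle z u).mp hzu⟩
    · rintro ⟨hz, hmax⟩
      refine ⟨(ha z x).mp (hz x (Or.inl rfl)), (ha z y).mp (hz y (Or.inr rfl)), ?_⟩
      rintro u ⟨h1, h2, h3⟩
      refine hmax u ?_ ((hle z u).mpr h3)
      rintro a (rfl | rfl)
      · exact (ha u a).mpr h1
      · exact (ha u a).mpr h2
end

section
/- Let P be a finite set with 0,1 ∈ P and let ⊔ and ⊓ be operators assigning to each pair of subsets of P a subset of P, identifying an element x with the singleton {x}, satisfying for all x,y,z ∈ P: (i) x ⊔ x = {x} and x ⊓ x = {x}; (ii) x ⊔ y = y ⊔ x and x ⊓ y = y ⊓ x; (iii) 0 ⊔ x = {x} and x ⊓ 1 = {x}; (iv) x ⊔ ((x ⊔ y) ⊔ z) = 0 ⊔ ((x ⊔ y) ⊔ z) and x ⊓ ((x ⊓ y) ⊓ z) = ((x ⊓ y) ⊓ z) ⊓ 1; (v) (x ⊓ y) ⊔ y = {y} and x ⊓ (x ⊔ y) = {x}; (vi) z ∈ x ⊔ y iff x ⊔ z = y ⊔ z = {z} and for every u ∈ P, x ⊔ u = y ⊔ u = u ⊓ z = {u} implies u =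 z, and z ∈ x ⊓ y iff z ⊓ x = z ⊓ y = {z} and for every u ∈ P, u ⊓ x = u ⊓ y = z ⊔ u = {u} implies u = z. Define x ≤ y iff x ⊔ y = {y}. Then for all x,y ∈ P, Min(U({x,y})) = x ⊔ y and Max(L({x,y})) = x ⊓ y, where U, L, Min, Max are taken with respect to ≤. -/
theorem stmt_7 {P : Type*} [Finite P] (osup oinf : Set P → Set P → Set P) (z0 z1 : P)
    (h_i : ∀ x : P, osup {x} {x} = {x} ∧ oinf {x} {x} = {x})
    (h_ii : ∀ x y : P, osup {x} {y} = osup {y} {x} ∧ oinf {x} {y} = oinf {y} {x})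
    (h_iii : ∀ x : P, osup {z0} {x} = {x} ∧ oinf {x} {z1} = {x})
    (h_iv : ∀ x y z : P,
      osup {x} (osup (osup {x} {y}) {z}) = osup {z0} (osup (osup {x} {y}) {z}) ∧
      oinf {x} (oinf (oinf {x} {y}) {z}) = oinf (oinf (oinf {x} {y}) {z}) {z1})
    (h_v : ∀ x y : P, osup (oinf {x} {y}) {y} = {y} ∧ oinf {x} (osup {x} {y}) = {x})
    (h_vi : ∀ x y z : P,
      (z ∈ osup {x} {y} ↔
        (osup {x} {z} = {z} ∧ osup {y} {z} = {z} ∧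
          ∀ u : P, (osup {x} {u} = {u} ∧ osup {y} {u} = {u} ∧ oinf {u} {z} = {u}) → u = z)) ∧
      (z ∈ oinf {x} {y} ↔
        (oinf {z} {x} = {z} ∧ oinf {z} {y} = {z} ∧
          ∀ u : P, (oinf {u} {x} = {u} ∧ oinf {u} {y} = {u} ∧ osup {z} {u} = {u}) → u = z)))
    (le : P → P → Prop) (hle : ∀ x y : P, le x y ↔ osup {x} {y} = {y}) :
    ∀ x y : P,
      MinSr le (UBr le {x, y}) = osup {x} {y} ∧
      MaxSr le (LBr le {x, y}) = oinf {x} {y} := by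
  have key : ∀ a b : P, oinf {a} {b} = {a} ↔ osup {a} {b} = {b} := by
    intro a b
    constructor
    · intro h
      have := (h_v a b).1
      rwa [h] at this
    · intro h
      have := (h_v a b).2
      rwa [h] at this
  intro x y
  constructor
  · ext z
    simp only [MinSr, UBr, Set.mem_setOf_eq, Set.mem_insert_iff, Set.mem_singleton_iff]
    rw [(h_vi x y z).1]
    constructor
    · rintro ⟨hub, hmin⟩
      refine ⟨(hle x z).1 (hub x (Or.inl rfl)), (hle y z).1 (hub y (Or.inr rfl)), ?_⟩
      rintro u ⟨hxu, hyu, huz⟩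
      refine hmin u ?_ ((hle u z).2 ((key u z).1 huz))
      rintro a (rfl | rfl)
      · exact (hle a u).2 hxu
      · exact (hle a u).2 hyu
    · rintro ⟨hx, hy, hmin⟩
      refine ⟨?_, ?_⟩
      · rintro a (rfl | rfl)
        · exact (hle a z).2 hx
        · exact (hle a z).2 hy
      · intro u hu huz
        exact hmin u ⟨(hle x u).1 (hu x (Or.inl rfl)), (hle y u).1 (hu y (Or.inr rfl)),
          (key u z).2 ((hle u z).1 huz)⟩
  · ext z
    simp only [MaxSr, LBr, Set.mem_setOf_eq, Set.mem_insert_iff, Set.mem_singleton_iff]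
    rw [(h_vi x y z).2]
    constructor
    · rintro ⟨hlb, hmax⟩
      refine ⟨(key z x).2 ((hle z x).1 (hlb x (Or.inl rfl))),
        (key z y).2 ((hle z y).1 (hlb y (Or.inr rfl))), ?_⟩
      rintro u ⟨hux, huy, hzu⟩
      refine hmax u ?_ ((hle z u).2 hzu)
      rintro a (rfl | rfl)
      · exact (hle u a).2 ((key u a).1 hux)
      · exact (hle u a).2 ((key u a).1 huy)
    · rintro ⟨hx, hy, hmax⟩
      refine ⟨?_, ?_⟩
      · rintro a (rfl | rfl)
        · exact (hle z a).2 ((key z a).1 hx)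
        · exact (hle z a).2 ((key z a).1 hy)
      · intro u hu hzu
        exact hmax u ⟨(key u x).2 ((hle u x).1 (hu x (Or.inl rfl))),
          (key u y).2 ((hle u y).1 (hu y (Or.inr rfl))), (hle z u).1 hzu⟩
end

section
/- Let (P,≤,',0,1) be a complemented poset. Then for all x,y ∈ P: x + x = {0}, x + y = y + x, x + 0 = {x}, x + 1 = {x'}, and x + x' = {1}. -/
/-- The symmetric difference A + B := Min U(Max L(A' ∪ B) ∪ Max L(A ∪ B')) in a
poset with a complementation map c. -/
def symdiff {P : Type*} [Preorder P] (c : P → P) (A B : Set P) : Set P :=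
  MinS (UB (MaxS (LB ((c '' A) ∪ B)) ∪ MaxS (LB (A ∪ (c '' B)))))

section Helpers

variable {P : Type*} [PartialOrder P]

lemma MaxS_singleton (a : P) : MaxS {a} = {a} := by
  ext z; simp [MaxS]; aesop

lemma MinS_singleton (a : P) : MinS {a} = {a} := by
  ext z; simp [MinS]; aesop

lemma LB_Iic (a b : P) : LB {a, b} = {z | z ≤ a ∧ z ≤ b} := by
  ext z; simp [LB]

lemma MaxS_Iic_s8 (a : P) : MaxS (Set.Iic a) = {a} := by
  ext z
  simp only [MaxS, Set.mem_Iic, Set.mem_setOf_eq, Set.mem_singleton_iff]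
  constructor
  · rintro ⟨hz, h⟩
    exact (h a le_rfl hz).symm
  · rintro rfl
    exact ⟨le_rfl, fun y hy hzy => le_antisymm hy hzy⟩

lemma MinS_Ici_s8 (a : P) : MinS (Set.Ici a) = {a} := by
  ext z
  simp only [MinS, Set.mem_Ici, Set.mem_setOf_eq, Set.mem_singleton_iff]
  constructor
  · rintro ⟨hz, h⟩
    exact (h a le_rfl hz).symm
  · rintro rfl
    exact ⟨le_rfl, fun y hy hzy => le_antisymm hzy hy⟩

lemma UB_singleton (a : P) : UB {a} = Set.Ici a := by
  ext z; simp [UB, Set.mem_Ici]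

variable [BoundedOrder P]

lemma LB_pair_bot (a : P) : LB {a, (⊥ : P)} = {(⊥ : P)} := by
  ext z
  simp only [LB, Set.mem_insert_iff, Set.mem_singleton_iff]
  constructor
  · intro h
    exact le_bot_iff.mp (h ⊥ (Or.inr rfl))
  · rintro rfl y (rfl | rfl) <;> simp

lemma LB_pair_top (a : P) : LB {a, (⊤ : P)} = Set.Iic a := by
  ext z
  simp only [LB, Set.mem_insert_iff, Set.mem_singleton_iff, Set.mem_Iic]
  constructor
  · intro h; exact h a (Or.inl rfl)
  · rintro h y (rfl | rfl) <;> simp [h]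

lemma UB_pair_bot (a : P) : UB {(⊥ : P), a} = Set.Ici a := by
  ext z
  simp only [UB, Set.mem_insert_iff, Set.mem_singleton_iff, Set.mem_Ici]
  constructor
  · intro h; exact h a (Or.inr rfl)
  · rintro h y (rfl | rfl) <;> simp [h]

end Helpers

theorem stmt_8 {P : Type*} [PartialOrder P] [BoundedOrder P] (c : P → P)
    (hanti : ∀ x y : P, x ≤ y → c y ≤ c x)
    (hinv : ∀ x : P, c (c x) = x)
    (hcompL : ∀ x : P, LB {x, c x} = {(⊥ : P)})
    (hcompU : ∀ x : P, UB {x, c x} = {(⊤ : P)}) :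
    ∀ x y : P,
      symdiff c {x} {x} = {(⊥ : P)} ∧
      symdiff c {x} {y} = symdiff c {y} {x} ∧
      symdiff c {x} {(⊥ : P)} = {x} ∧
      symdiff c {x} {(⊤ : P)} = {c x} ∧
      symdiff c {x} {c x} = {(⊤ : P)} := by
  have hc_bot : c (⊥ : P) = ⊤ := by
    have h := hcompU ⊥
    have : c ⊥ ∈ UB {(⊥ : P), c ⊥} := by
      intro y hy
      rcases hy with rfl | rfl
      · exact bot_le
      · exact le_rfl
    rw [h] at this
    exact this
  have hc_top : c (⊤ : P) = ⊥ := by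
    rw [← hc_bot, hinv]
  intro x y
  refine ⟨?_, ?_, ?_, ?_, ?_⟩
  · -- x + x = {⊥}
    simp only [symdiff, Set.image_singleton, Set.singleton_union]
    have h1 : ({c x, x} : Set P) = {x, c x} := Set.pair_comm _ _
    rw [h1, hcompL, MaxS_singleton, Set.union_self, UB_singleton, MinS_Ici_s8]
  · -- commutativity
    simp only [symdiff, Set.image_singleton, Set.singleton_union]
    rw [Set.pair_comm (c x) y, Set.pair_comm x (c y), Set.union_comm]
  · -- x + ⊥ = {x}
    simp only [symdiff, Set.image_singleton, Set.singleton_union, hc_bot]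
    rw [LB_pair_bot, LB_pair_top, MaxS_singleton, MaxS_Iic_s8,
      Set.singleton_union, UB_pair_bot, MinS_Ici_s8]
  · -- x + ⊤ = {c x}
    simp only [symdiff, Set.image_singleton, Set.singleton_union, hc_top]
    rw [LB_pair_top, LB_pair_bot, MaxS_singleton, MaxS_Iic_s8,
      Set.union_singleton, show (insert ⊥ {c x} : Set P) = {⊥, c x} from rfl,
      UB_pair_bot, MinS_Ici_s8]
  · -- x + c x = {⊤}
    simp only [symdiff, Set.image_singleton, Set.singleton_union, hinv]
    rw [show ({c x, c x} : Set P) = {c x} by simp,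
      show ({x, x} : Set P) = {x} by simp]
    rw [show LB ({c x} : Set P) = Set.Iic (c x) by ext z; simp [LB],
      show LB ({x} : Set P) = Set.Iic x by ext z; simp [LB],
      MaxS_Iic_s8, MaxS_Iic_s8, Set.singleton_union,
      show (insert (c x) {x} : Set P) = {x, c x} from Set.pair_comm _ _,
      hcompU, MinS_singleton]
end

section
/- Let (P,≤,',0,1) be a Boolean poset satisfying the ACC and the DCC. Then for all x,y ∈ P: x + y = Min(U(Max(L(Min(U({x,y})) ∪ Min(U({x',y'})))))). -/
section Aux

variable {P : Type*} [PartialOrder P]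

lemma mem_LB' {A : Set P} {z : P} : z ∈ LB A ↔ ∀ a ∈ A, z ≤ a := Iff.rfl
lemma mem_UB' {A : Set P} {z : P} : z ∈ UB A ↔ ∀ a ∈ A, a ≤ z := Iff.rfl

lemma LB_union' (A B : Set P) : LB (A ∪ B) = LB A ∩ LB B := by
  ext z
  constructor
  · intro h; exact ⟨fun a ha => h a (Or.inl ha), fun a ha => h a (Or.inr ha)⟩
  · rintro ⟨h1, h2⟩ a (ha | ha)
    exacts [h1 a ha, h2 a ha]

lemma UB_union' (A B : Set P) : UB (A ∪ B) = UB A ∩ UB B := by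
  ext z
  constructor
  · intro h; exact ⟨fun a ha => h a (Or.inl ha), fun a ha => h a (Or.inr ha)⟩
  · rintro ⟨h1, h2⟩ a (ha | ha)
    exacts [h1 a ha, h2 a ha]

lemma UB_anti' {A B : Set P} (h : A ⊆ B) : UB B ⊆ UB A := fun z hz a ha => hz a (h ha)
lemma LB_anti' {A B : Set P} (h : A ⊆ B) : LB B ⊆ LB A := fun z hz a ha => hz a (h ha)

lemma subset_LB_UB' (S : Set P) : S ⊆ LB (UB S) := fun s hs u hu => hu s hs

lemma UB_LB_UB' (S : Set P) : UB (LB (UB S)) = UB S :=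
  Set.Subset.antisymm (UB_anti' (subset_LB_UB' S)) (fun z hz w hw => hw z hz)

lemma exists_le_maximal' (hACC : ∀ f : ℕ → P, ¬ StrictMono f) (S : Set P) {a : P}
    (ha : a ∈ S) : ∃ m ∈ MaxS S, a ≤ m := by
  by_contra h
  push_neg at h
  have step : ∀ b : {b : P // b ∈ S ∧ a ≤ b}, ∃ b' : {b : P // b ∈ S ∧ a ≤ b}, b.1 < b'.1 := by
    rintro ⟨b, hbS, hab⟩
    have hnm : ¬ (∀ y ∈ S, b ≤ y → y = b) := fun hmax => h b ⟨hbS, hmax⟩ hab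
    push_neg at hnm
    obtain ⟨y, hyS, hby, hne⟩ := hnm
    exact ⟨⟨y, hyS, hab.trans hby⟩, lt_of_le_of_ne hby (Ne.symm hne)⟩
  choose g hg using step
  have hsm : StrictMono (fun n => (g^[n] ⟨a, ha, le_refl a⟩).1) := by
    apply strictMono_nat_of_lt_succ
    intro n
    rw [Function.iterate_succ_apply']
    exact hg _
  exact hACC _ hsm

lemma exists_minimal_le' (hDCC : ∀ f : ℕ → P, ¬ StrictAnti f) (S : Set P) {a : P}
    (ha : a ∈ S) : ∃ m ∈ MinS S, m ≤ a := by
  by_contra h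
  push_neg at h
  have step : ∀ b : {b : P // b ∈ S ∧ b ≤ a}, ∃ b' : {b : P // b ∈ S ∧ b ≤ a}, b'.1 < b.1 := by
    rintro ⟨b, hbS, hab⟩
    have hnm : ¬ (∀ y ∈ S, y ≤ b → y = b) := fun hmin => h b ⟨hbS, hmin⟩ hab
    push_neg at hnm
    obtain ⟨y, hyS, hby, hne⟩ := hnm
    exact ⟨⟨y, hyS, hby.trans hab⟩, lt_of_le_of_ne hby hne⟩
  choose g hg using step
  have hsm : StrictAnti (fun n => (g^[n] ⟨a, ha, le_refl a⟩).1) := by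
    apply strictAnti_nat_of_succ_lt
    intro n
    rw [Function.iterate_succ_apply']
    exact hg _
  exact hDCC _ hsm

lemma UB_MaxS' (hACC : ∀ f : ℕ → P, ¬ StrictMono f) (S : Set P) : UB (MaxS S) = UB S := by
  apply Set.Subset.antisymm
  · intro z hz s hs
    obtain ⟨m, hm, hsm⟩ := exists_le_maximal' hACC S hs
    exact hsm.trans (hz m hm)
  · exact UB_anti' (fun m hm => hm.1)

lemma LB_MinS' (hDCC : ∀ f : ℕ → P, ¬ StrictAnti f) (S : Set P) : LB (MinS S) = LB S := by
  apply Set.Subset.antisymm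
  · intro z hz s hs
    obtain ⟨m, hm, hms⟩ := exists_minimal_le' hDCC S hs
    exact (hz m hm).trans hms
  · exact LB_anti' (fun m hm => hm.1)

variable (c : P → P) (hanti : ∀ x y : P, x ≤ y → c y ≤ c x) (hinv : ∀ x : P, c (c x) = x)

include hanti hinv in
lemma image_UB' (A : Set P) : c '' UB A = LB (c '' A) := by
  ext z
  constructor
  · rintro ⟨w, hw, rfl⟩ b ⟨a, ha, rfl⟩
    exact hanti _ _ (hw a ha)
  · intro hz
    refine ⟨c z, ?_, hinv z⟩
    intro a ha
    have h1 := hz (c a) ⟨a, ha, rfl⟩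
    have h2 := hanti _ _ h1
    rwa [hinv] at h2

include hanti hinv in
lemma image_LB' (A : Set P) : c '' LB A = UB (c '' A) := by
  ext z
  constructor
  · rintro ⟨w, hw, rfl⟩ b ⟨a, ha, rfl⟩
    exact hanti _ _ (hw a ha)
  · intro hz
    refine ⟨c z, ?_, hinv z⟩
    intro a ha
    have h1 := hz (c a) ⟨a, ha, rfl⟩
    have h2 := hanti _ _ h1
    rwa [hinv] at h2

include hinv in
lemma image_image_c' (A : Set P) : c '' (c '' A) = A := by
  rw [Set.image_image]
  simp only [hinv, Set.image_id']

include hanti hinv in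
lemma hdist_dual' (hdist : ∀ (x y : P) (A : Set P),
      UB (LB {x, y} ∪ A) = UB (LB (UB ({x} ∪ A) ∪ UB ({y} ∪ A)))) :
    ∀ (x y : P) (A : Set P),
      LB (UB {x, y} ∪ A) = LB (UB (LB ({x} ∪ A) ∪ LB ({y} ∪ A))) := by
  intro x y A
  have h := congrArg (Set.image c) (hdist (c x) (c y) (c '' A))
  simp only [image_UB' c hanti hinv, image_LB' c hanti hinv, Set.image_union,
      Set.image_singleton, Set.image_pair, image_image_c' c hinv, hinv] at h
  exact h

end Aux

theorem stmt_10 {P : Type*} [PartialOrder P] [BoundedOrder P] (c : P → P)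
    (hanti : ∀ x y : P, x ≤ y → c y ≤ c x)
    (hinv : ∀ x : P, c (c x) = x)
    (hcompL : ∀ x : P, LB {x, c x} = {(⊥ : P)})
    (hcompU : ∀ x : P, UB {x, c x} = {(⊤ : P)})
    (hACC : ∀ f : ℕ → P, ¬ StrictMono f)
    (hDCC : ∀ f : ℕ → P, ¬ StrictAnti f)
    (hdist : ∀ (x y : P) (A : Set P),
      UB (LB {x, y} ∪ A) = UB (LB (UB ({x} ∪ A) ∪ UB ({y} ∪ A)))) :
    ∀ x y : P,
      symdiff c {x} {y} =
        MinS (UB (MaxS (LB (MinS (UB {x, y}) ∪ MinS (UB {c x, c y}))))) := by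
  have hdual := hdist_dual' c hanti hinv hdist
  -- key lemma: LB ({x} ∪ UB {c x, b}) = LB {x, b}
  have key : ∀ x b : P, LB ({x} ∪ UB {c x, b}) = LB {x, b} := by
    intro x b
    ext z
    constructor
    · intro h
      have hzx : z ≤ x := h x (Or.inl rfl)
      have hz' : z ∈ LB (UB {c x, b} ∪ {z}) := by
        rintro a (ha | ha)
        · exact h a (Or.inr ha)
        · rw [Set.mem_singleton_iff] at ha
          exact ha ▸ le_refl z
      rw [hdual (c x) b {z}] at hz'
      have hb : b ∈ UB (LB ({c x} ∪ {z}) ∪ LB ({b} ∪ {z})) := by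
        rintro w (hw | hw)
        · have hw1 : w ≤ c x := hw (c x) (Or.inl rfl)
          have hw2 : w ≤ z := hw z (Or.inr rfl)
          have hwm : w ∈ LB {x, c x} := by
            rintro a (rfl | ha)
            · exact hw2.trans hzx
            · rw [Set.mem_singleton_iff] at ha
              exact ha ▸ hw1
          rw [hcompL x, Set.mem_singleton_iff] at hwm
          exact hwm ▸ bot_le
        · exact hw b (Or.inl rfl)
      have hzb : z ≤ b := hz' b hb
      rintro a (rfl | ha)
      · exact hzx
      · rw [Set.mem_singleton_iff] at ha
        exact ha ▸ hzb
    · intro h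
      rintro a (ha | ha)
      · rw [Set.mem_singleton_iff] at ha
        exact ha ▸ h x (Or.inl rfl)
      · have hzb : z ≤ b := h b (Or.inr rfl)
        exact hzb.trans (ha b (Or.inr rfl))
  intro x y
  have lhs_eq : symdiff c {x} {y} = MinS (UB (LB {c x, y} ∪ LB {x, c y})) := by
    unfold symdiff
    rw [Set.image_singleton, Set.image_singleton, Set.singleton_union, Set.singleton_union]
    rw [UB_union', UB_MaxS' hACC, UB_MaxS' hACC, ← UB_union']
  have rhs_eq : MinS (UB (MaxS (LB (MinS (UB {x, y}) ∪ MinS (UB {c x, c y}))))) =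
      MinS (UB (LB {x, c y} ∪ LB {y, c x})) := by
    rw [UB_MaxS' hACC, LB_union', LB_MinS' hDCC, LB_MinS' hDCC, ← LB_union',
        hdual x y (UB {c x, c y})]
    have e1 : LB ({x} ∪ UB {c x, c y}) = LB {x, c y} := key x (c y)
    have e2 : LB ({y} ∪ UB {c x, c y}) = LB {y, c x} := by
      rw [Set.pair_comm (c x) (c y)]
      exact key y (c x)
    rw [e1, e2, UB_LB_UB']
  rw [lhs_eq, rhs_eq, Set.union_comm, Set.pair_comm (c x) y]
end

section
/- Let (P,≤,',0,1) be a Boolean poset satisfying the ACC and the DCC and let a,b ∈ P with a ≤ b. Then a + b = Min(U(Max(L({a',b})))) = Min(U(L({a',b}))). -/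
theorem stmt_11 {P : Type*} [PartialOrder P] [BoundedOrder P] (c : P → P)
    (hanti : ∀ x y : P, x ≤ y → c y ≤ c x)
    (hinv : ∀ x : P, c (c x) = x)
    (hcompL : ∀ x : P, LB {x, c x} = {(⊥ : P)})
    (hcompU : ∀ x : P, UB {x, c x} = {(⊤ : P)})
    (hACC : ∀ f : ℕ → P, ¬ StrictMono f)
    (hDCC : ∀ f : ℕ → P, ¬ StrictAnti f)
    (hdist : ∀ (x y : P) (A : Set P),
      UB (LB {x, y} ∪ A) = UB (LB (UB ({x} ∪ A) ∪ UB ({y} ∪ A))))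
    (a b : P) (hab : a ≤ b) :
    symdiff c {a} {b} = MinS (UB (MaxS (LB {c a, b}))) ∧
    symdiff c {a} {b} = MinS (UB (LB {c a, b})) := by
  -- well-foundedness of > from ACC
  have hwf : WellFounded ((· > ·) : P → P → Prop) := by
    rw [RelEmbedding.wellFounded_iff_isEmpty]
    refine ⟨fun f => hACC f fun m n hmn => ?_⟩
    exact f.map_rel_iff.2 hmn
  -- every element of a set lies below a maximal element of the set
  have hmax : ∀ (A : Set P) (x : P), x ∈ A → ∃ m ∈ MaxS A, x ≤ m := by
    intro A x hx
    obtain ⟨m, ⟨hmA, hxm⟩, hmin⟩ := hwf.has_min {y ∈ A | x ≤ y} ⟨x, hx, le_refl x⟩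
    refine ⟨m, ⟨hmA, fun y hy hmy => ?_⟩, hxm⟩
    by_contra hne
    exact hmin y ⟨hy, le_trans hxm hmy⟩ (lt_of_le_of_ne hmy fun h => hne h.symm)
  -- the second lower-bound set is {⊥}
  have hA2 : LB ({a} ∪ (c '' {b})) = {(⊥ : P)} := by
    ext x
    simp only [Set.image_singleton, LB, Set.mem_setOf_eq, Set.mem_union,
      Set.mem_singleton_iff]
    constructor
    · intro h
      have hxa : x ≤ a := h a (Or.inl rfl)
      have hxcb : x ≤ c b := h (c b) (Or.inr rfl)
      have hxca : x ≤ c a := le_trans hxcb (hanti a b hab)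
      have : x ∈ LB {a, c a} := by
        intro y hy
        rcases hy with h1 | h2
        · exact h1 ▸ hxa
        · exact h2 ▸ hxca
      rw [hcompL a] at this
      exact this
    · rintro rfl y _
      exact bot_le
  have hMaxbot : MaxS ({(⊥ : P)} : Set P) = {(⊥ : P)} := by
    ext x
    simp only [MaxS, Set.mem_setOf_eq, Set.mem_singleton_iff]
    constructor
    · exact fun h => h.1
    · rintro rfl
      exact ⟨rfl, fun y hy _ => hy⟩
  have himg : (c '' {a} : Set P) = {c a} := Set.image_singleton
  have hA1 : LB ((c '' {a}) ∪ {b}) = LB ({c a, b} : Set P) := by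
    rw [himg]; rfl
  -- first reduction: the union with {⊥} doesn't change upper bounds
  have hUB : UB (MaxS (LB ((c '' {a}) ∪ {b})) ∪ MaxS (LB ({a} ∪ (c '' {b}))))
      = UB (MaxS (LB ({c a, b} : Set P))) := by
    rw [hA1, hA2, hMaxbot]
    ext x
    simp only [UB, Set.mem_setOf_eq, Set.mem_union, Set.mem_singleton_iff]
    constructor
    · intro h y hy
      exact h y (Or.inl hy)
    · intro h y hy
      rcases hy with h1 | h2
      · exact h y h1
      · exact h2 ▸ bot_le
  have heq1 : symdiff c {a} {b} = MinS (UB (MaxS (LB {c a, b}))) := by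
    unfold symdiff
    rw [hUB]
  -- UB (MaxS A) = UB A
  have hUBMax : UB (MaxS (LB ({c a, b} : Set P))) = UB (LB ({c a, b} : Set P)) := by
    ext x
    simp only [UB, Set.mem_setOf_eq]
    constructor
    · intro h y hy
      obtain ⟨m, hm, hym⟩ := hmax _ y hy
      exact le_trans hym (h m hm)
    · intro h y hy
      exact h y hy.1
  exact ⟨heq1, by rw [heq1, hUBMax]⟩
end

section
/- Let (P,≤,',0,1) be a finite Boolean poset. Then for all a,b ∈ P: Max(L({a,b})) = {a} if and only if a ≤ b, and a + 1 = {a'}; hence the Boolean poset obtained from the dual (P,+,·,0,1) (where A·B := Max(L(A ∪ B)) and A+B := Min(U(Max(L(A' ∪ B)) ∪ Max(L(A ∪ B')))), with order a ⊑ b iff a·b = {a} and complementation a ↦ a+1) coincides with (P,≤,',0,1). -/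
/-- The symmetric difference A + B := Min U(Max L(A' ∪ B) ∪ Max L(A ∪ B')). -/
def pplus {P : Type*} [Preorder P] (c : P → P) (A B : Set P) : Set P :=
  MinS (UB (MaxS (LB ((c '' A) ∪ B)) ∪ MaxS (LB (A ∪ (c '' B)))))

theorem stmt_17 {P : Type*} [PartialOrder P] [BoundedOrder P] [Finite P] (c : P → P)
    (hanti : ∀ x y : P, x ≤ y → c y ≤ c x)
    (hinv : ∀ x : P, c (c x) = x)
    (hcompL : ∀ x : P, LB {x, c x} = {(⊥ : P)})
    (hcompU : ∀ x : P, UB {x, c x} = {(⊤ : P)})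
    (hdist : ∀ x y z : P,
      LB (UB {x, y} ∪ {z}) = LB (UB (LB {x, z} ∪ LB {y, z}))) :
    ∀ a b : P,
      (MaxS (LB {a, b}) = {a} ↔ a ≤ b) ∧
      pplus c {a} {(⊤ : P)} = {c a} := by

  have hcT : c ⊤ = ⊥ := by
    have h := hcompL (⊤ : P)
    have hm : c ⊤ ∈ LB {(⊤ : P), c ⊤} := by
      intro y hy
      rcases hy with rfl | rfl
      · exact le_top
      · exact le_refl _
    rw [h] at hm
    exact hm
  intro a b
  constructor
  · constructor
    · intro h
      have ha : a ∈ MaxS (LB {a, b}) := by rw [h]; rfl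
      exact ha.1 b (by simp)
    · intro hab
      have hLB : LB {a, b} = Set.Iic a := by
        ext x
        constructor
        · intro hx; exact hx a (by simp)
        · intro hx y hy
          rcases hy with rfl | rfl
          · exact hx
          · exact le_trans hx hab
      ext x
      simp only [MaxS, hLB, Set.mem_setOf_eq, Set.mem_Iic, Set.mem_singleton_iff]
      constructor
      · rintro ⟨hx, hmax⟩
        exact (hmax a le_rfl hx).symm
      · rintro rfl
        exact ⟨le_rfl, fun y hy hle => le_antisymm hy hle⟩
  · have h1 : LB ((c '' {a}) ∪ {(⊤ : P)}) = Set.Iic (c a) := by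
      ext x
      constructor
      · intro hx; exact hx (c a) (by simp)
      · intro hx y hy
        rcases hy with ⟨z, hz, rfl⟩ | rfl
        · rcases hz with rfl; exact hx
        · exact le_top
    have h2 : LB ({a} ∪ (c '' {(⊤ : P)})) = {(⊥ : P)} := by
      ext x
      constructor
      · intro hx
        have := hx (c ⊤) (by simp)
        rw [hcT] at this
        exact le_antisymm this bot_le
      · rintro rfl y hy
        exact bot_le
    have hMax1 : MaxS (Set.Iic (c a)) = {c a} := by
      ext x
      simp only [MaxS, Set.mem_setOf_eq, Set.mem_Iic, Set.mem_singleton_iff]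
      constructor
      · rintro ⟨hx, hmax⟩
        exact (hmax (c a) le_rfl hx).symm
      · rintro rfl
        exact ⟨le_rfl, fun y hy hle => le_antisymm hy hle⟩
    have hMax2 : MaxS ({(⊥ : P)} : Set P) = {(⊥ : P)} := by
      ext x
      simp only [MaxS, Set.mem_setOf_eq, Set.mem_singleton_iff]
      constructor
      · rintro ⟨rfl, _⟩; rfl
      · rintro rfl
        exact ⟨rfl, fun y hy _ => hy⟩
    have hUB : UB ({c a, (⊥ : P)} : Set P) = Set.Ici (c a) := by
      ext x
      constructor
      · intro hx; exact hx (c a) (by simp)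
      · intro hx y hy
        rcases hy with rfl | rfl
        · exact hx
        · exact bot_le
    unfold pplus
    rw [h1, h2, hMax1, hMax2]
    have : ({c a} : Set P) ∪ {(⊥ : P)} = {c a, ⊥} := by
      ext x; simp [or_comm]
    rw [this, hUB]
    ext x
    simp only [MinS, Set.mem_setOf_eq, Set.mem_Ici, Set.mem_singleton_iff]
    constructor
    · rintro ⟨hx, hmin⟩
      exact (hmin (c a) le_rfl hx).symm
    · rintro rfl
      exact ⟨le_rfl, fun y hy hle => le_antisymm hle hy⟩
end
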